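/- Exceptional interacting model with polynomial Hamiltonian algebra: fix N ≥ 2 and work with 2N qubits. Let S_X = {the Pauli string with X at qubits i and i+1 and identity elsewhere : 0 ≤ i ≤ N−2} ∪ {the Pauli string with X at qubits N+i and N+i+1 and identity elsewhere : 0 ≤ i ≤ N−2} ∪ {Z_0Z_N}. Then the Hamiltonian algebra g(S_X) is contained in the ℝ-linear span of the 2N+2 matrices {Complex.I • P(q)} for q ranging over the Pauli strings {X at i, i+1 : 0 ≤ i ≤ N−2} ∪ {X at N+i, N+i+1 : 0 ≤ i ≤ N−2} ∪ {Z_0Z_N} ∪ {Y at 0, X at 1, Z at N} ∪ {Z at 0, Y at N, X at N+1} ∪ {Y at 0, X at 1, Y at N, X at N+1}; in particular dim g(S_X) ≤ 2N+2, so despite the interaction term Z_0Z_N the dimension grows only linearly with N. -/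

import Mathlib

open Matrix

attribute [local instance 100] LieRing.ofAssociativeRing

/-- The four 2×2 Pauli matrices: identity, X, Y, Z. -/
noncomputable def pauli : Fin 4 → Matrix (Fin 2) (Fin 2) ℂ
  | 0 => 1
  | 1 => !![0, 1; 1, 0]
  | 2 => !![0, -Complex.I; Complex.I, 0]
  | 3 => !![1, 0; 0, -1]

/-- The matrix of an `n`-qubit Pauli string `p : Fin n → Fin 4`,
the Kronecker product of the `pauli (p i)`. -/
noncomputable def PauliMat {n : ℕ} (p : Fin n → Fin 4) :
    Matrix (Fin n → Fin 2) (Fin n → Fin 2) ℂ :=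
  Matrix.of fun x y => ∏ i, pauli (p i) (x i) (y i)

/-- The Hamiltonian algebra of a set of Pauli strings: the Lie ℝ-subalgebra of the
complex matrices generated by `{I • P(p) : p ∈ S}`. -/
noncomputable def hamAlg {n : ℕ} (S : Set (Fin n → Fin 4)) :
    LieSubalgebra ℝ (Matrix (Fin n → Fin 2) (Fin n → Fin 2) ℂ) :=
  LieSubalgebra.lieSpan ℝ _ ((fun p => Complex.I • PauliMat p) '' S)

/-- The Pauli string `→A_iB_j`: letter `A` at `i`, letter `B` at `j`, `Z` strictly
between `i` and `j`, identity elsewhere. -/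
def ladderString {n : ℕ} (i j : Fin n) (A B : Fin 4) : Fin n → Fin 4 :=
  fun k => if k = i then A else if k = j then B
    else if min i j < k ∧ k < max i j then 3 else 0

/-- The Pauli string `Z_kZ_l`. -/
def zzString {n : ℕ} (k l : Fin n) : Fin n → Fin 4 :=
  fun m => if m = k ∨ m = l then 3 else 0

/-- The Pauli string `Z_k`. -/
def zString {n : ℕ} (k : Fin n) : Fin n → Fin 4 :=
  fun m => if m = k then 3 else 0

/-- A choice of letter: `X` if `c = 0`, `Y` if `c = 1`. -/
def ltr (c : Fin 2) : Fin 4 := if c = 0 then 1 else 2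

/-- The opposite letter: `Y` if `c = 0`, `X` if `c = 1`. -/
def ltrBar (c : Fin 2) : Fin 4 := if c = 0 then 2 else 1

/-- Pauli strings of the Jordan–Wigner transformed hopping terms of one spin species,
with sites embedded via `v : Fin N → Fin (2N)` and hoppings on the edges of `G`. -/
def Sspin {N : ℕ} (G : SimpleGraph (Fin N)) (v : Fin N → Fin (2 * N)) :
    Set (Fin (2 * N) → Fin 4) :=
  {p | ∃ k l : Fin N, G.Adj k l ∧
    (p = ladderString (v k) (v l) 1 1 ∨ p = ladderString (v k) (v l) 2 2)}

/-- Pauli strings of the Jordan–Wigner transformed free fermion model. -/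
def Sfree {N : ℕ} (G : SimpleGraph (Fin N)) (u d : Fin N → Fin (2 * N)) :
    Set (Fin (2 * N) → Fin 4) :=
  Sspin G u ∪ Sspin G d

/-- Pauli strings of the model with a single on-site Coulomb interaction at fermion
site `i0` (interaction term `Z_{u i0} Z_{d i0}`). -/
def Sint {N : ℕ} (G : SimpleGraph (Fin N)) (u d : Fin N → Fin (2 * N)) (i0 : Fin N) :
    Set (Fin (2 * N) → Fin 4) :=
  Sfree G u d ∪ {zzString (u i0) (d i0)}

/-- The Pauli string with `X` at positions `i` and `i+1`, identity elsewhere. -/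
def xxString {M : ℕ} (i : ℕ) : Fin M → Fin 4 :=
  fun m => if m.val = i ∨ m.val = i + 1 then 1 else 0

/-- The Pauli string `Y_0 X_1 Z_N` on `2N` qubits. -/
def yxzString (N : ℕ) : Fin (2 * N) → Fin 4 :=
  fun m => if m.val = 0 then 2 else if m.val = 1 then 1 else
    if m.val = N then 3 else 0

/-- The Pauli string `Z_0 Y_N X_{N+1}` on `2N` qubits. -/
def zyxString (N : ℕ) : Fin (2 * N) → Fin 4 :=
  fun m => if m.val = 0 then 3 else if m.val = N then 2 else
    if m.val = N + 1 then 1 else 0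

/-- The Pauli string `Y_0 X_1 Y_N X_{N+1}` on `2N` qubits. -/
def yxyxString (N : ℕ) : Fin (2 * N) → Fin 4 :=
  fun m => if m.val = 0 then 2 else if m.val = 1 then 1 else
    if m.val = N then 2 else if m.val = N + 1 then 1 else 0

/-- The generating set `S_X`: `X_iX_{i+1}` for `0 ≤ i ≤ N−2` for both spin species,
plus the interaction string `Z_0 Z_N`. -/
def S_X (N : ℕ) (hN : 2 ≤ N) : Set (Fin (2 * N) → Fin 4) :=
  {p | ∃ i : ℕ, i + 2 ≤ N ∧ (p = xxString i ∨ p = xxString (N + i))} ∪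
  {zzString (⟨0, by omega⟩ : Fin (2 * N)) ⟨N, by omega⟩}

/-- The spanning set of `2N + 2` Pauli strings containing `g(S_X)`. -/
def Q_X (N : ℕ) (hN : 2 ≤ N) : Set (Fin (2 * N) → Fin 4) :=
  {p | ∃ i : ℕ, i + 2 ≤ N ∧ (p = xxString i ∨ p = xxString (N + i))} ∪
  {zzString (⟨0, by omega⟩ : Fin (2 * N)) ⟨N, by omega⟩,
   yxzString N, zyxString N, yxyxString N}


/-! ### Auxiliary machinery -/

/-- Multiplication table of Pauli letters (up to phase). -/
def mul4 (a b : Fin 4) : Fin 4 :=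
  ![![0,1,2,3], ![1,0,3,2], ![2,3,0,1], ![3,2,1,0]] a b

/-- Phase table: `pauli a * pauli b = ph a b • pauli (mul4 a b)`. -/
noncomputable def ph (a b : Fin 4) : ℂ :=
  ![![1,1,1,1], ![1,1,Complex.I,-Complex.I],
    ![1,-Complex.I,1,Complex.I], ![1,Complex.I,-Complex.I,1]] a b

lemma mul4_comm (a b : Fin 4) : mul4 a b = mul4 b a := by revert a b; decide

lemma ph_conj (a b : Fin 4) : ph b a = starRingEnd ℂ (ph a b) := by
  fin_cases a <;> fin_cases b <;> simp [ph, vecHead, vecTail]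

lemma ph_diag (a : Fin 4) : ph a a = 1 := by fin_cases a <;> simp [ph, vecHead, vecTail]
lemma ph_zero_left (b : Fin 4) : ph 0 b = 1 := by fin_cases b <;> simp [ph, vecHead, vecTail]
lemma ph_zero_right (a : Fin 4) : ph a 0 = 1 := by fin_cases a <;> simp [ph, vecHead, vecTail]

lemma pauli_mul (a b : Fin 4) : pauli a * pauli b = ph a b • pauli (mul4 a b) := by
  fin_cases a <;> fin_cases b <;>
    · ext i j
      fin_cases i <;> fin_cases j <;>
        simp [pauli, ph, mul4, vecHead, vecTail, Matrix.mul_apply, Fin.sum_univ_two,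
          Complex.ext_iff]

lemma PauliMat_mul {n : ℕ} (p q : Fin n → Fin 4) :
    PauliMat p * PauliMat q
      = (∏ i, ph (p i) (q i)) • PauliMat fun i => mul4 (p i) (q i) := by
  ext x y
  have key : ∀ i : Fin n, ∑ t : Fin 2, pauli (p i) (x i) t * pauli (q i) t (y i)
      = ph (p i) (q i) * pauli (mul4 (p i) (q i)) (x i) (y i) := by
    intro i
    have := congrFun (congrFun (pauli_mul (p i) (q i)) (x i)) (y i)
    simpa [Matrix.mul_apply] using this
  calc (PauliMat p * PauliMat q) x y
      = ∑ z ∈ Fintype.piFinset (fun _ : Fin n => (Finset.univ : Finset (Fin 2))),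
          ∏ i, (pauli (p i) (x i) (z i) * pauli (q i) (z i) (y i)) := by
        simp [PauliMat, Matrix.mul_apply, Finset.prod_mul_distrib, Fintype.piFinset_univ]
    _ = ∏ i, ∑ t : Fin 2, pauli (p i) (x i) t * pauli (q i) t (y i) := by
        rw [Finset.prod_univ_sum]
    _ = ((∏ i, ph (p i) (q i)) • PauliMat fun i => mul4 (p i) (q i)) x y := by
        simp only [key]
        rw [Finset.prod_mul_distrib]
        simp [PauliMat]

lemma bracket_eq {n : ℕ} (p q : Fin n → Fin 4) :
    ⁅Complex.I • PauliMat p, Complex.I • PauliMat q⁆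
      = (-2 * (∏ i, ph (p i) (q i)).im : ℝ) •
          (Complex.I • PauliMat fun i => mul4 (p i) (q i)) := by
  have hstr : (fun i => mul4 (q i) (p i)) = fun i => mul4 (p i) (q i) :=
    funext fun i => mul4_comm _ _
  have hc : (∏ i, ph (q i) (p i)) = starRingEnd ℂ (∏ i, ph (p i) (q i)) := by
    rw [map_prod]; exact Finset.prod_congr rfl fun i _ => ph_conj _ _
  rw [Ring.lie_def]
  rw [smul_mul_assoc, smul_mul_assoc, mul_smul_comm, mul_smul_comm,
    PauliMat_mul p q, PauliMat_mul q p, hstr, hc]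
  rw [smul_smul, smul_smul, smul_smul, smul_smul]
  rw [← sub_smul]
  rw [← smul_assoc]
  congr 1
  set z := ∏ i, ph (p i) (q i)
  simp only [smul_eq_mul, Complex.real_smul]
  push_cast
  rw [Complex.ext_iff]
  simp [Complex.conj_re, Complex.conj_im]
  ring

lemma bracket_mem_span {n : ℕ} {S : Set (Fin n → Fin 4)} {p q : Fin n → Fin 4}
    (h : (fun i => mul4 (p i) (q i)) ∈ S) :
    ⁅Complex.I • PauliMat p, Complex.I • PauliMat q⁆
      ∈ Submodule.span ℝ ((fun p => Complex.I • PauliMat p) '' S) := by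
  rw [bracket_eq]
  exact Submodule.smul_mem _ _ (Submodule.subset_span ⟨_, h, rfl⟩)

lemma bracket_zero_of_im {n : ℕ} {p q : Fin n → Fin 4}
    (h : (∏ i, ph (p i) (q i)).im = 0) :
    ⁅Complex.I • PauliMat p, Complex.I • PauliMat q⁆ = 0 := by
  rw [bracket_eq, h]; simp

lemma bracket_zero_of_compat {n : ℕ} {p q : Fin n → Fin 4}
    (h : ∀ i, p i = q i ∨ p i = 0 ∨ q i = 0) :
    ⁅Complex.I • PauliMat p, Complex.I • PauliMat q⁆ = 0 := by
  apply bracket_zero_of_im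
  have : ∏ i, ph (p i) (q i) = 1 := Finset.prod_eq_one fun i _ => by
    rcases h i with h | h | h
    · rw [h, ph_diag]
    · rw [h, ph_zero_left]
    · rw [h, ph_zero_right]
  rw [this]; rfl

lemma mem_swap {n : ℕ} {V : Submodule ℝ (Matrix (Fin n → Fin 2) (Fin n → Fin 2) ℂ)}
    {x y : Matrix (Fin n → Fin 2) (Fin n → Fin 2) ℂ} (h : ⁅x, y⁆ ∈ V) : ⁅y, x⁆ ∈ V := by
  rw [← lie_skew y x]
  exact V.neg_mem h

lemma prod_two_points {n : ℕ} (f : Fin n → ℂ) (a b : Fin n) (hab : a ≠ b)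
    (h : ∀ i, i ≠ a → i ≠ b → f i = 1) : ∏ i, f i = f a * f b := by
  rw [← Finset.prod_pair hab]
  exact (Finset.prod_subset (Finset.subset_univ _) (fun x _ hx => by
    simp only [Finset.mem_insert, Finset.mem_singleton, not_or] at hx
    exact h x hx.1 hx.2)).symm

lemma ex1 (N : ℕ) (hN : 2 ≤ N) : (∏ m, ph (yxzString N m) (zyxString N m)).im = 0 := by
  rw [prod_two_points _ (⟨0, by omega⟩ : Fin (2*N)) ⟨N, by omega⟩
    (Fin.ne_of_val_ne (show (0:ℕ) ≠ N by omega))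
    (fun i hi1 hi2 => by
      have h1 : i.val ≠ 0 := fun h => hi1 (Fin.ext h)
      have h2 : i.val ≠ N := fun h => hi2 (Fin.ext h)
      simp only [yxzString, zyxString]
      split_ifs <;> first | (exfalso; omega) | simp [ph, vecHead, vecTail])]
  have e1 : yxzString N ⟨0, by omega⟩ = 2 := by simp [yxzString]
  have e2 : zyxString N ⟨0, by omega⟩ = 3 := by simp [zyxString]
  have e3 : yxzString N ⟨N, by omega⟩ = 3 := by
    simp only [yxzString]; split_ifs <;> first | rfl | omega
  have e4 : zyxString N ⟨N, by omega⟩ = 2 := by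
    simp only [zyxString]; split_ifs <;> first | rfl | omega
  rw [e1, e2, e3, e4]
  simp [ph, vecHead, vecTail]

lemma ex2 (N : ℕ) (hN : 2 ≤ N) : (∏ m, ph (yxyxString N m)
    (zzString (⟨0, by omega⟩ : Fin (2*N)) ⟨N, by omega⟩ m)).im = 0 := by
  rw [prod_two_points _ (⟨0, by omega⟩ : Fin (2*N)) ⟨N, by omega⟩
    (Fin.ne_of_val_ne (show (0:ℕ) ≠ N by omega))
    (fun i hi1 hi2 => by
      have h1 : i.val ≠ 0 := fun h => hi1 (Fin.ext h)
      have h2 : i.val ≠ N := fun h => hi2 (Fin.ext h)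
      simp only [yxyxString, zzString, Fin.ext_iff]
      split_ifs <;> first | (exfalso; omega) | simp [ph, vecHead, vecTail])]
  have e1 : yxyxString N ⟨0, by omega⟩ = 2 := by simp [yxyxString]
  have e2 : zzString (⟨0, by omega⟩ : Fin (2*N)) ⟨N, by omega⟩ ⟨0, by omega⟩ = 3 := by
    simp [zzString]
  have e3 : yxyxString N ⟨N, by omega⟩ = 2 := by
    simp only [yxyxString]; split_ifs <;> first | rfl | omega
  have e4 : zzString (⟨0, by omega⟩ : Fin (2*N)) ⟨N, by omega⟩ ⟨N, by omega⟩ = 3 := by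
    simp only [zzString, Fin.mk.injEq]; split_ifs <;> first | rfl | tauto
  rw [e1, e2, e3, e4]
  simp [ph, vecHead, vecTail]

-- The twelve product-string identities.
lemma id1 (N : ℕ) (hN : 2 ≤ N) : (fun m => mul4 (xxString 0 m)
    (zzString (⟨0, by omega⟩ : Fin (2*N)) ⟨N, by omega⟩ m)) = yxzString N := by
  funext m
  simp only [mul4, xxString, zzString, yxzString, Fin.ext_iff]
  split_ifs <;> first | rfl | omega

lemma id2 (N : ℕ) (hN : 2 ≤ N) : (fun m => mul4 (xxString N m)
    (zzString (⟨0, by omega⟩ : Fin (2*N)) ⟨N, by omega⟩ m)) = zyxString N := by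
  funext m
  simp only [mul4, xxString, zzString, zyxString, Fin.ext_iff]
  split_ifs <;> first | rfl | omega

lemma id3 (N : ℕ) (hN : 2 ≤ N) : (fun m => mul4 (xxString 0 m) (yxzString N m))
    = zzString (⟨0, by omega⟩ : Fin (2*N)) ⟨N, by omega⟩ := by
  funext m
  simp only [mul4, xxString, yxzString, zzString, Fin.ext_iff]
  split_ifs <;> first | rfl | omega

lemma id4 (N : ℕ) (hN : 2 ≤ N) : (fun m => mul4 (xxString N m) (yxzString N m)) = yxyxString N := by
  funext m
  simp only [mul4, xxString, yxzString, yxyxString, Fin.ext_iff]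
  split_ifs <;> first | rfl | omega

lemma id5 (N : ℕ) (hN : 2 ≤ N) : (fun m => mul4 (xxString 0 m) (zyxString N m)) = yxyxString N := by
  funext m
  simp only [mul4, xxString, zyxString, yxyxString, Fin.ext_iff]
  split_ifs <;> first | rfl | omega

lemma id6 (N : ℕ) (hN : 2 ≤ N) : (fun m => mul4 (xxString N m) (zyxString N m))
    = zzString (⟨0, by omega⟩ : Fin (2*N)) ⟨N, by omega⟩ := by
  funext m
  simp only [mul4, xxString, zyxString, zzString, Fin.ext_iff]
  split_ifs <;> first | rfl | omega

lemma id7 (N : ℕ) (hN : 2 ≤ N) : (fun m => mul4 (xxString 0 m) (yxyxString N m)) = zyxString N := by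
  funext m
  simp only [mul4, xxString, yxyxString, zyxString, Fin.ext_iff]
  split_ifs <;> first | rfl | omega

lemma id8 (N : ℕ) (hN : 2 ≤ N) : (fun m => mul4 (xxString N m) (yxyxString N m)) = yxzString N := by
  funext m
  simp only [mul4, xxString, yxyxString, yxzString, Fin.ext_iff]
  split_ifs <;> first | rfl | omega

lemma id9 (N : ℕ) (hN : 2 ≤ N) : (fun m => mul4 (zzString (⟨0, by omega⟩ : Fin (2*N)) ⟨N, by omega⟩ m)
    (yxzString N m)) = xxString 0 := by
  funext m
  simp only [mul4, zzString, yxzString, xxString, Fin.ext_iff]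
  split_ifs <;> first | rfl | omega

lemma id10 (N : ℕ) (hN : 2 ≤ N) : (fun m => mul4 (zzString (⟨0, by omega⟩ : Fin (2*N)) ⟨N, by omega⟩ m)
    (zyxString N m)) = xxString N := by
  funext m
  simp only [mul4, zzString, zyxString, xxString, Fin.ext_iff]
  split_ifs <;> first | rfl | omega

lemma id11 (N : ℕ) (hN : 2 ≤ N) : (fun m => mul4 (yxzString N m) (yxyxString N m)) = xxString N := by
  funext m
  simp only [mul4, yxzString, yxyxString, xxString, Fin.ext_iff]
  split_ifs <;> first | rfl | omega

lemma id12 (N : ℕ) (hN : 2 ≤ N) : (fun m => mul4 (zyxString N m) (yxyxString N m)) = xxString 0 := by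
  funext m
  simp only [mul4, zyxString, yxyxString, xxString, Fin.ext_iff]
  split_ifs <;> first | rfl | omega

-- Compatibility (pointwise commuting) facts.
lemma compX {M : ℕ} (i j : ℕ) : ∀ m : Fin M,
    xxString i m = xxString j m ∨ xxString i m = 0 ∨ xxString j m = 0 := by
  intro m; simp only [xxString]; split_ifs <;> simp

lemma compC (N : ℕ) (hN : 2 ≤ N) (k : ℕ) (h0 : k ≠ 0) (h1 : k ≠ N) (h2 : k + 1 ≠ N) :
    ∀ m : Fin (2*N), xxString k m = zzString (⟨0, by omega⟩ : Fin (2*N)) ⟨N, by omega⟩ m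
      ∨ xxString k m = 0 ∨ zzString (⟨0, by omega⟩ : Fin (2*N)) ⟨N, by omega⟩ m = 0 := by
  intro m; simp only [xxString, zzString, Fin.ext_iff]
  split_ifs <;> first | (exfalso; omega) | simp

lemma compD (N : ℕ) (hN : 2 ≤ N) (k : ℕ) (h0 : k ≠ 0) (h1 : k ≠ N) (h2 : k + 1 ≠ N) :
    ∀ m : Fin (2*N), xxString k m = yxzString N m
      ∨ xxString k m = 0 ∨ yxzString N m = 0 := by
  intro m; simp only [xxString, yxzString]
  split_ifs <;> first | (exfalso; omega) | simp

lemma compE (N : ℕ) (hN : 2 ≤ N) (k : ℕ) (h0 : k ≠ 0) (h1 : k ≠ N) (h2 : k + 1 ≠ N) :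
    ∀ m : Fin (2*N), xxString k m = zyxString N m
      ∨ xxString k m = 0 ∨ zyxString N m = 0 := by
  intro m; simp only [xxString, zyxString]
  split_ifs <;> first | (exfalso; omega) | simp

lemma compF (N : ℕ) (hN : 2 ≤ N) (k : ℕ) (h0 : k ≠ 0) (h1 : k ≠ N) (h2 : k + 1 ≠ N) :
    ∀ m : Fin (2*N), xxString k m = yxyxString N m
      ∨ xxString k m = 0 ∨ yxyxString N m = 0 := by
  intro m; simp only [xxString, yxyxString]
  split_ifs <;> first | (exfalso; omega) | simp


lemma key_brackets (N : ℕ) (hN : 2 ≤ N) :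
    ∀ p ∈ Q_X N hN, ∀ q ∈ Q_X N hN,
      ⁅Complex.I • PauliMat p, Complex.I • PauliMat q⁆
        ∈ Submodule.span ℝ ((fun p => Complex.I • PauliMat p) '' Q_X N hN) := by
  set W := Submodule.span ℝ ((fun p => Complex.I • PauliMat p) '' Q_X N hN) with hW
  -- membership facts for Q_X
  have mxx : ∀ i : ℕ, i + 2 ≤ N → xxString i ∈ Q_X N hN :=
    fun i hi => Or.inl ⟨i, hi, Or.inl rfl⟩
  have mxx' : ∀ i : ℕ, i + 2 ≤ N → xxString (N + i) ∈ Q_X N hN :=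
    fun i hi => Or.inl ⟨i, hi, Or.inr rfl⟩
  have mxx0 : xxString 0 ∈ Q_X N hN := mxx 0 hN
  have mxxN : (xxString N : Fin (2*N) → Fin 4) ∈ Q_X N hN :=
    Or.inl ⟨0, hN, Or.inr (congrArg xxString (Nat.add_zero N).symm)⟩
  have mzz : zzString (⟨0, by omega⟩ : Fin (2*N)) ⟨N, by omega⟩ ∈ Q_X N hN :=
    Or.inr (Or.inl rfl)
  have myxz : yxzString N ∈ Q_X N hN := Or.inr (Or.inr (Or.inl rfl))
  have mzyx : zyxString N ∈ Q_X N hN := Or.inr (Or.inr (Or.inr (Or.inl rfl)))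
  have myxyx : yxyxString N ∈ Q_X N hN := Or.inr (Or.inr (Or.inr (Or.inr rfl)))
  -- brackets of xx-strings with the four special strings
  have h0C : ⁅Complex.I • PauliMat (xxString 0), Complex.I • PauliMat
      (zzString (⟨0, by omega⟩ : Fin (2*N)) ⟨N, by omega⟩)⁆ ∈ W :=
    bracket_mem_span (by rw [id1 N hN]; exact myxz)
  have hNC : ⁅Complex.I • PauliMat (xxString N), Complex.I • PauliMat
      (zzString (⟨0, by omega⟩ : Fin (2*N)) ⟨N, by omega⟩)⁆ ∈ W :=
    bracket_mem_span (by rw [id2 N hN]; exact mzyx)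
  have hkC : ∀ k : ℕ, k ≠ 0 → k ≠ N → k + 1 ≠ N →
      ⁅Complex.I • PauliMat (xxString k), Complex.I • PauliMat
        (zzString (⟨0, by omega⟩ : Fin (2*N)) ⟨N, by omega⟩)⁆ ∈ W := fun k a b c => by
    rw [bracket_zero_of_compat (compC N hN k a b c)]; exact zero_mem _
  have h0D : ⁅Complex.I • PauliMat (xxString 0), Complex.I • PauliMat (yxzString N)⁆ ∈ W :=
    bracket_mem_span (by rw [id3 N hN]; exact mzz)
  have hND : ⁅Complex.I • PauliMat (xxString N), Complex.I • PauliMat (yxzString N)⁆ ∈ W :=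
    bracket_mem_span (by rw [id4 N hN]; exact myxyx)
  have hkD : ∀ k : ℕ, k ≠ 0 → k ≠ N → k + 1 ≠ N →
      ⁅Complex.I • PauliMat (xxString k), Complex.I • PauliMat (yxzString N)⁆ ∈ W :=
    fun k a b c => by
      rw [bracket_zero_of_compat (compD N hN k a b c)]; exact zero_mem _
  have h0E : ⁅Complex.I • PauliMat (xxString 0), Complex.I • PauliMat (zyxString N)⁆ ∈ W :=
    bracket_mem_span (by rw [id5 N hN]; exact myxyx)
  have hNE : ⁅Complex.I • PauliMat (xxString N), Complex.I • PauliMat (zyxString N)⁆ ∈ W :=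
    bracket_mem_span (by rw [id6 N hN]; exact mzz)
  have hkE : ∀ k : ℕ, k ≠ 0 → k ≠ N → k + 1 ≠ N →
      ⁅Complex.I • PauliMat (xxString k), Complex.I • PauliMat (zyxString N)⁆ ∈ W :=
    fun k a b c => by
      rw [bracket_zero_of_compat (compE N hN k a b c)]; exact zero_mem _
  have h0F : ⁅Complex.I • PauliMat (xxString 0), Complex.I • PauliMat (yxyxString N)⁆ ∈ W :=
    bracket_mem_span (by rw [id7 N hN]; exact mzyx)
  have hNF : ⁅Complex.I • PauliMat (xxString N), Complex.I • PauliMat (yxyxString N)⁆ ∈ W :=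
    bracket_mem_span (by rw [id8 N hN]; exact myxz)
  have hkF : ∀ k : ℕ, k ≠ 0 → k ≠ N → k + 1 ≠ N →
      ⁅Complex.I • PauliMat (xxString k), Complex.I • PauliMat (yxyxString N)⁆ ∈ W :=
    fun k a b c => by
      rw [bracket_zero_of_compat (compF N hN k a b c)]; exact zero_mem _
  -- brackets among the four special strings
  have hCD : ⁅Complex.I • PauliMat (zzString (⟨0, by omega⟩ : Fin (2*N)) ⟨N, by omega⟩),
      Complex.I • PauliMat (yxzString N)⁆ ∈ W :=
    bracket_mem_span (by rw [id9 N hN]; exact mxx0)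
  have hCE : ⁅Complex.I • PauliMat (zzString (⟨0, by omega⟩ : Fin (2*N)) ⟨N, by omega⟩),
      Complex.I • PauliMat (zyxString N)⁆ ∈ W :=
    bracket_mem_span (by rw [id10 N hN]; exact mxxN)
  have hFC : ⁅Complex.I • PauliMat (yxyxString N),
      Complex.I • PauliMat (zzString (⟨0, by omega⟩ : Fin (2*N)) ⟨N, by omega⟩)⁆ ∈ W := by
    rw [bracket_zero_of_im (ex2 N hN)]; exact zero_mem _
  have hDE : ⁅Complex.I • PauliMat (yxzString N), Complex.I • PauliMat (zyxString N)⁆ ∈ W := by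
    rw [bracket_zero_of_im (ex1 N hN)]; exact zero_mem _
  have hDF : ⁅Complex.I • PauliMat (yxzString N), Complex.I • PauliMat (yxyxString N)⁆ ∈ W :=
    bracket_mem_span (by rw [id11 N hN]; exact mxxN)
  have hEF : ⁅Complex.I • PauliMat (zyxString N), Complex.I • PauliMat (yxyxString N)⁆ ∈ W :=
    bracket_mem_span (by rw [id12 N hN]; exact mxx0)
  have hdiag : ∀ r : Fin (2*N) → Fin 4,
      ⁅Complex.I • PauliMat r, Complex.I • PauliMat r⁆ ∈ W := fun r => by
    rw [bracket_zero_of_compat (fun m => Or.inl rfl)]; exact zero_mem _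
  -- dispatcher for xx-strings against a special string
  intro p hp q hq
  -- helper to handle xx family indices
  have hxx_case : ∀ (s : Fin (2*N) → Fin 4),
      (⁅Complex.I • PauliMat (xxString 0 : Fin (2*N) → Fin 4), Complex.I • PauliMat s⁆ ∈ W) →
      (⁅Complex.I • PauliMat (xxString N : Fin (2*N) → Fin 4), Complex.I • PauliMat s⁆ ∈ W) →
      (∀ k : ℕ, k ≠ 0 → k ≠ N → k + 1 ≠ N →
        ⁅Complex.I • PauliMat (xxString k : Fin (2*N) → Fin 4), Complex.I • PauliMat s⁆ ∈ W) →
      ∀ i : ℕ, i + 2 ≤ N →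
        (⁅Complex.I • PauliMat (xxString i : Fin (2*N) → Fin 4), Complex.I • PauliMat s⁆ ∈ W) ∧
        (⁅Complex.I • PauliMat (xxString (N + i) : Fin (2*N) → Fin 4), Complex.I • PauliMat s⁆ ∈ W) := by
    intro s h0 hN' hk i hi
    constructor
    · rcases Nat.eq_zero_or_pos i with rfl | hipos
      · exact h0
      · exact hk i (by omega) (by omega) (by omega)
    · rcases Nat.eq_zero_or_pos i with rfl | hipos
      · exact hN'
      · exact hk (N + i) (by omega) (by omega) (by omega)
  rcases hp with ⟨i, hi, rfl | rfl⟩ | rfl | rfl | rfl | rfl <;>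
    rcases hq with ⟨j, hj, rfl | rfl⟩ | rfl | rfl | rfl | rfl
  -- p = xxString i
  · rw [bracket_zero_of_compat (compX i j)]; exact zero_mem _
  · rw [bracket_zero_of_compat (compX i (N + j))]; exact zero_mem _
  · exact (hxx_case _ h0C hNC hkC i hi).1
  · exact (hxx_case _ h0D hND hkD i hi).1
  · exact (hxx_case _ h0E hNE hkE i hi).1
  · exact (hxx_case _ h0F hNF hkF i hi).1
  -- p = xxString (N+i)
  · rw [bracket_zero_of_compat (compX (N + i) j)]; exact zero_mem _
  · rw [bracket_zero_of_compat (compX (N + i) (N + j))]; exact zero_mem _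
  · exact (hxx_case _ h0C hNC hkC i hi).2
  · exact (hxx_case _ h0D hND hkD i hi).2
  · exact (hxx_case _ h0E hNE hkE i hi).2
  · exact (hxx_case _ h0F hNF hkF i hi).2
  -- p = zzString
  · exact mem_swap (hxx_case _ h0C hNC hkC j hj).1
  · exact mem_swap (hxx_case _ h0C hNC hkC j hj).2
  · exact hdiag _
  · exact hCD
  · exact hCE
  · exact mem_swap hFC
  -- p = yxzString
  · exact mem_swap (hxx_case _ h0D hND hkD j hj).1
  · exact mem_swap (hxx_case _ h0D hND hkD j hj).2
  · exact mem_swap hCD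
  · exact hdiag _
  · exact hDE
  · exact hDF
  -- p = zyxString
  · exact mem_swap (hxx_case _ h0E hNE hkE j hj).1
  · exact mem_swap (hxx_case _ h0E hNE hkE j hj).2
  · exact mem_swap hCE
  · exact mem_swap hDE
  · exact hdiag _
  · exact hEF
  -- p = yxyxString
  · exact mem_swap (hxx_case _ h0F hNF hkF j hj).1
  · exact mem_swap (hxx_case _ h0F hNF hkF j hj).2
  · exact hFC
  · exact mem_swap hDF
  · exact mem_swap hEF
  · exact hdiag _

/-- Enumeration of the `2N+2` spanning strings. -/
def gstr (N : ℕ) (hN : 2 ≤ N) : Fin (2*N+2) → (Fin (2*N) → Fin 4) := fun j =>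
  if j.val < N - 1 then xxString j.val
  else if j.val < 2*N - 2 then xxString (N + (j.val - (N-1)))
  else if j.val = 2*N - 2 then zzString (⟨0, by omega⟩ : Fin (2*N)) ⟨N, by omega⟩
  else if j.val = 2*N - 1 then yxzString N
  else if j.val = 2*N then zyxString N
  else yxyxString N

lemma QX_subset_range (N : ℕ) (hN : 2 ≤ N) : Q_X N hN ⊆ Set.range (gstr N hN) := by
  rintro p (⟨i, hi, rfl | rfl⟩ | rfl | rfl | rfl | rfl)
  · refine ⟨⟨i, by omega⟩, ?_⟩
    show (if i < N - 1 then xxString i else _) = _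
    rw [if_pos (by omega)]
  · refine ⟨⟨N - 1 + i, by omega⟩, ?_⟩
    show (if N - 1 + i < N - 1 then _ else if N - 1 + i < 2*N - 2 then
      xxString (N + (N - 1 + i - (N-1))) else _) = _
    rw [if_neg (by omega), if_pos (by omega), show N - 1 + i - (N - 1) = i from by omega]
  · refine ⟨⟨2*N - 2, by omega⟩, ?_⟩
    show (if 2*N - 2 < N - 1 then _ else if 2*N - 2 < 2*N - 2 then _
      else if 2*N - 2 = 2*N - 2 then zzString ⟨0, _⟩ ⟨N, _⟩ else _) = _
    rw [if_neg (by omega), if_neg (by omega), if_pos rfl]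
  · refine ⟨⟨2*N - 1, by omega⟩, ?_⟩
    show (if 2*N - 1 < N - 1 then _ else if 2*N - 1 < 2*N - 2 then _
      else if 2*N - 1 = 2*N - 2 then _ else if 2*N - 1 = 2*N - 1 then yxzString N else _) = _
    rw [if_neg (by omega), if_neg (by omega), if_neg (by omega), if_pos rfl]
  · refine ⟨⟨2*N, by omega⟩, ?_⟩
    show (if 2*N < N - 1 then _ else if 2*N < 2*N - 2 then _
      else if 2*N = 2*N - 2 then _ else if 2*N = 2*N - 1 then _
      else if 2*N = 2*N then zyxString N else _) = _
    rw [if_neg (by omega), if_neg (by omega), if_neg (by omega), if_neg (by omega), if_pos rfl]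
  · refine ⟨⟨2*N + 1, by omega⟩, ?_⟩
    show (if 2*N + 1 < N - 1 then _ else if 2*N + 1 < 2*N - 2 then _
      else if 2*N + 1 = 2*N - 2 then _ else if 2*N + 1 = 2*N - 1 then _
      else if 2*N + 1 = 2*N then _ else yxyxString N) = _
    rw [if_neg (by omega), if_neg (by omega), if_neg (by omega), if_neg (by omega),
      if_neg (by omega)]

/-- The exceptional interacting model: despite the interaction term `Z_0 Z_N`, the
Hamiltonian algebra `g(S_X)` is contained in the ℝ-linear span of `2N + 2` Pauli
strings, so its dimension is at most `2N + 2`, linear in `N`. -/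
theorem hamAlg_SX_polynomial (N : ℕ) (hN : 2 ≤ N) :
    (∀ x ∈ hamAlg (S_X N hN),
      x ∈ Submodule.span ℝ ((fun p => Complex.I • PauliMat p) '' Q_X N hN)) ∧
    Module.finrank ℝ (hamAlg (S_X N hN)) ≤ 2 * N + 2 := by
  set W := Submodule.span ℝ ((fun p => Complex.I • PauliMat p) '' Q_X N hN) with hW
  have hclosed : ∀ x ∈ W, ∀ y ∈ W, ⁅x, y⁆ ∈ W := by
    intro x hx y hy
    induction hx, hy using Submodule.span_induction₂ with
    | mem_mem a b ha hb =>
      obtain ⟨p, hp, rfl⟩ := ha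
      obtain ⟨q, hq, rfl⟩ := hb
      exact key_brackets N hN p hp q hq
    | zero_left y hy => rw [zero_lie]; exact zero_mem _
    | zero_right x hx => rw [lie_zero]; exact zero_mem _
    | add_left x y z hx hy hz h1 h2 => rw [add_lie]; exact add_mem h1 h2
    | add_right x y z hx hy hz h1 h2 => rw [lie_add]; exact add_mem h1 h2
    | smul_left r x y hx hy h => rw [smul_lie]; exact Submodule.smul_mem _ _ h
    | smul_right r x y hx hy h => rw [lie_smul]; exact Submodule.smul_mem _ _ h
  let WL : LieSubalgebra ℝ (Matrix (Fin (2*N) → Fin 2) (Fin (2*N) → Fin 2) ℂ) :=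
    { W with lie_mem' := fun {x y} hx hy => hclosed x hx y hy }
  have hSQ : S_X N hN ⊆ Q_X N hN := by
    rintro p (hp | rfl)
    · exact Or.inl hp
    · exact Or.inr (Or.inl rfl)
  have hle : hamAlg (S_X N hN) ≤ WL := by
    rw [hamAlg, LieSubalgebra.lieSpan_le]
    intro x hx
    obtain ⟨p, hp, rfl⟩ := hx
    exact Submodule.subset_span ⟨p, hSQ hp, rfl⟩
  have part1 : ∀ x ∈ hamAlg (S_X N hN), x ∈ W := fun x hx => hle hx
  refine ⟨part1, ?_⟩
  have hrange : (fun p => Complex.I • PauliMat p) '' Q_X N hN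
      ⊆ Set.range ((fun p => Complex.I • PauliMat p) ∘ gstr N hN) := by
    rw [Set.range_comp]
    exact Set.image_mono (QX_subset_range N hN)
  have hfin : Module.finrank ℝ W ≤ 2 * N + 2 := by
    classical
    have h1 : W ≤ Submodule.span ℝ
        (Set.range ((fun p => Complex.I • PauliMat p) ∘ gstr N hN)) :=
      Submodule.span_mono hrange
    have h2 := finrank_range_le_card (R := ℝ) ((fun p => Complex.I • PauliMat p) ∘ gstr N hN)
    rw [Set.finrank] at h2
    calc Module.finrank ℝ W
        ≤ Module.finrank ℝ (Submodule.span ℝ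
            (Set.range ((fun p => Complex.I • PauliMat p) ∘ gstr N hN))) :=
          Submodule.finrank_mono h1
      _ ≤ Fintype.card (Fin (2*N+2)) := h2
      _ = 2 * N + 2 := by simp
  have heq : Module.finrank ℝ (hamAlg (S_X N hN))
      = Module.finrank ℝ (hamAlg (S_X N hN)).toSubmodule := rfl
  rw [heq]
  exact le_trans (Submodule.finrank_mono (fun x hx => part1 x hx)) hfin
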